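/- Let X_p and X_q be disjoint subsets of ℝ^N, set X := X_p ∪ X_q, assume X_p is closed in X, and for x ∈ X let S(x) ∈ {X_p, X_q} be the stratum containing x. Assume that for each x ∈ X there is a linear subspace T(x) ⊆ ℝ^N whose underlying set equals the tangent cone tangentConeAt ℝ (S(x)) x. Define β on X × X by β(x,y) := dist( (x−y)/‖x−y‖, T(x) ) for x ≠ y and β(x,x) := 0 (this equals the distance of the secant line spanned by x−y to T(x)). Say that a sequence of linear subspaces Vₙ converges to a linear subspace V if d_H(Vₙ ∩ B̄₁(0), V ∩ B̄₁(0)) → 0. Assume: (continuity of tangent spaces) the map x ↦ T(x) is continuous on X_p and on X_q in this sense; (Whitney condition (a)) for every y ∈ X_p and every sequence xₙ ∈ X_q with xₙ → y such that T(xₙ) converges to a linear subspace τ, one has T(y) ⊆ τ; (Whitney condition (b)) for every y ∈ X_p, every sequence (xₙ) lying entirely in X_q or entirely in X_p with xₙ → y, and every sequence yₙ ∈ X_p with yₙ → y and xₙ ≠ yₙ for all n, if the secant lines span(xₙ − yₙ) converge to a line l and T(xₙ) converges to a linear subspace τ, then l ⊆ τ. Then the restriction of β to X × X_p is upper semicontinuous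 (with respect to the subspace topology of X × X_p ⊆ ℝ^N × ℝ^N). -/

import Mathlib

open Classical Metric Set Filter
open scoped Topology

set_option synthInstance.maxHeartbeats 1000000
set_option maxHeartbeats 2000000

namespace Stmt16

variable {N : ℕ}

/-- Convergence of a sequence of linear subspaces to a linear subspace: Hausdorff
convergence of the intersections with the closed unit ball. -/
def SubConv (V : ℕ → Submodule ℝ (EuclideanSpace ℝ (Fin N)))
    (Vlim : Submodule ℝ (EuclideanSpace ℝ (Fin N))) : Prop :=
  Tendsto (fun n => EMetric.hausdorffEdist
      ((V n : Set (EuclideanSpace ℝ (Fin N))) ∩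
        Metric.closedBall (0 : EuclideanSpace ℝ (Fin N)) 1)
      ((Vlim : Set (EuclideanSpace ℝ (Fin N))) ∩
        Metric.closedBall (0 : EuclideanSpace ℝ (Fin N)) 1)) atTop (𝓝 0)

/-- The function `β(x,y)`: the distance of the normalized secant direction
`(x−y)/‖x−y‖` to the tangent space `T(x)` (equivalently, the distance of the secant
line spanned by `x−y` to `T(x)`), with `β(x,x) := 0`. -/
noncomputable def beta (T : EuclideanSpace ℝ (Fin N) → Submodule ℝ (EuclideanSpace ℝ (Fin N)))
    (x y : EuclideanSpace ℝ (Fin N)) : ℝ :=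
  if x = y then 0
  else Metric.infDist (‖x - y‖⁻¹ • (x - y)) (T x : Set (EuclideanSpace ℝ (Fin N)))

local notation "E" => EuclideanSpace ℝ (Fin N)

lemma subconv_of_le {V : ℕ → Submodule ℝ (EuclideanSpace ℝ (Fin N))}
    {τ : Submodule ℝ (EuclideanSpace ℝ (Fin N))} {b : ℕ → ℝ}
    (hb : Tendsto b atTop (𝓝 0))
    (h : ∀ n, EMetric.hausdorffEdist
      ((V n : Set E) ∩ Metric.closedBall 0 1)
      ((τ : Set E) ∩ Metric.closedBall 0 1) ≤ ENNReal.ofReal (b n)) :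
    SubConv V τ := by
  have h0 : Tendsto (fun n => ENNReal.ofReal (b n)) atTop (𝓝 0) := by
    simpa using ENNReal.tendsto_ofReal hb
  exact tendsto_of_tendsto_of_tendsto_of_le_of_le tendsto_const_nhds h0
    (fun n => zero_le) h

lemma subconv_span {vs : ℕ → EuclideanSpace ℝ (Fin N)} {v : EuclideanSpace ℝ (Fin N)}
    (hn : ∀ n, ‖vs n‖ = 1) (hv : ‖v‖ = 1) (h : Tendsto vs atTop (𝓝 v)) :
    SubConv (fun n => Submodule.span ℝ {vs n}) (Submodule.span ℝ {v}) := by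
  have key : ∀ (a b : EuclideanSpace ℝ (Fin N)), ‖a‖ = 1 → ‖b‖ = 1 →
      ∀ x ∈ (Submodule.span ℝ {a} : Set E) ∩ Metric.closedBall 0 1,
        EMetric.infEdist x ((Submodule.span ℝ {b} : Set E) ∩ Metric.closedBall 0 1)
          ≤ ENNReal.ofReal (dist a b) := by
    intro a b ha hb x hx
    obtain ⟨hx1, hx2⟩ := hx
    obtain ⟨t, ht⟩ := Submodule.mem_span_singleton.mp hx1
    have htle : |t| ≤ 1 := by
      have : ‖x‖ ≤ 1 := mem_closedBall_zero_iff.mp hx2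
      rw [← ht, norm_smul, ha, mul_one] at this
      simpa using this
    have hy1 : t • b ∈ (Submodule.span ℝ {b} : Set E) :=
      Submodule.smul_mem _ _ (Submodule.mem_span_singleton_self b)
    have hy2 : t • b ∈ Metric.closedBall (0 : EuclideanSpace ℝ (Fin N)) 1 := by
      rw [mem_closedBall_zero_iff, norm_smul, hb, mul_one]
      exact htle
    have hmem : t • b ∈ (Submodule.span ℝ {b} : Set E) ∩ Metric.closedBall 0 1 := ⟨hy1, hy2⟩
    calc EMetric.infEdist x ((Submodule.span ℝ {b} : Set E) ∩ Metric.closedBall 0 1)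
          ≤ edist x (t • b) := EMetric.infEdist_le_edist_of_mem hmem
      _ = ENNReal.ofReal (dist x (t • b)) := by rw [edist_dist]
      _ ≤ ENNReal.ofReal (dist a b) := by
          apply ENNReal.ofReal_le_ofReal
          rw [← ht, dist_eq_norm, ← smul_sub, norm_smul, dist_eq_norm]
          calc |t| * ‖a - b‖ ≤ 1 * ‖a - b‖ := by
                exact mul_le_mul_of_nonneg_right htle (norm_nonneg _)
            _ = ‖a - b‖ := one_mul _
  apply subconv_of_le (b := fun n => dist (vs n) v)
  · simpa using tendsto_iff_dist_tendsto_zero.mp h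
  · intro n
    apply EMetric.hausdorffEdist_le_of_infEdist
    · exact key (vs n) v (hn n) hv
    · intro x hx
      have := key v (vs n) hv (hn n) x hx
      rwa [dist_comm] at this

lemma tendsto_apply_clm {Q : ℕ → (EuclideanSpace ℝ (Fin N)) →L[ℝ] EuclideanSpace ℝ (Fin N)}
    {P : (EuclideanSpace ℝ (Fin N)) →L[ℝ] EuclideanSpace ℝ (Fin N)}
    (h : Tendsto Q atTop (𝓝 P)) (z : EuclideanSpace ℝ (Fin N)) :
    Tendsto (fun n => Q n z) atTop (𝓝 (P z)) := by
  rw [tendsto_iff_norm_sub_tendsto_zero]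
  have hb : Tendsto (fun n => ‖Q n - P‖ * ‖z‖) atTop (𝓝 0) := by
    simpa using (tendsto_iff_norm_sub_tendsto_zero.mp h).mul_const ‖z‖
  apply squeeze_zero (fun n => norm_nonneg _) _ hb
  intro n
  calc ‖Q n z - P z‖ = ‖(Q n - P) z‖ := by simp
    _ ≤ ‖Q n - P‖ * ‖z‖ := (Q n - P).le_opNorm z

/-- Compactness of the Grassmannian: every sequence of submodules has a subsequence
converging in the `SubConv` sense. -/
lemma exists_subconv (V : ℕ → Submodule ℝ (EuclideanSpace ℝ (Fin N))) :
    ∃ φ : ℕ → ℕ, StrictMono φ ∧ ∃ τ : Submodule ℝ (EuclideanSpace ℝ (Fin N)),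
      SubConv (fun n => V (φ n)) τ := by
  set Q : ℕ → (EuclideanSpace ℝ (Fin N)) →L[ℝ] EuclideanSpace ℝ (Fin N) :=
    fun n => (V n).subtypeL.comp (Submodule.orthogonalProjection (V n)) with hQdef
  have hQmem : ∀ n (z : EuclideanSpace ℝ (Fin N)), Q n z ∈ V n := fun n z =>
    SetLike.coe_mem _
  have hQfix : ∀ n (z : EuclideanSpace ℝ (Fin N)), z ∈ V n → Q n z = z := by
    intro n z hz
    exact Submodule.starProjection_eq_self_iff.mpr hz
  have hQnorm : ∀ n (z : EuclideanSpace ℝ (Fin N)), ‖Q n z‖ ≤ ‖z‖ := by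
    intro n z
    have h1 : ‖Q n z‖ = ‖Submodule.orthogonalProjection (V n) z‖ := rfl
    rw [h1]
    calc ‖Submodule.orthogonalProjection (V n) z‖ ≤ ‖Submodule.orthogonalProjection (V n)‖ * ‖z‖ :=
          (Submodule.orthogonalProjection (V n)).le_opNorm z
      _ ≤ 1 * ‖z‖ := by
          exact mul_le_mul_of_nonneg_right (Submodule.orthogonalProjection_norm_le _) (norm_nonneg _)
      _ = ‖z‖ := one_mul _
  have hQball : ∀ n, Q n ∈ Metric.closedBall
      (0 : (EuclideanSpace ℝ (Fin N)) →L[ℝ] EuclideanSpace ℝ (Fin N)) 1 := by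
    intro n
    rw [mem_closedBall_zero_iff]
    exact ContinuousLinearMap.opNorm_le_bound _ zero_le_one (fun z => by
      simpa using hQnorm n z)
  obtain ⟨P, hPmem, φ, hφ, hPt⟩ := (isCompact_closedBall
    (0 : (EuclideanSpace ℝ (Fin N)) →L[ℝ] EuclideanSpace ℝ (Fin N)) 1).tendsto_subseq hQball
  have hPnorm : ∀ z : EuclideanSpace ℝ (Fin N), ‖P z‖ ≤ ‖z‖ := by
    intro z
    have := tendsto_apply_clm hPt z
    refine le_of_tendsto (this.norm) (Filter.Eventually.of_forall fun n => hQnorm (φ n) z)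
  have hPidem : ∀ z : EuclideanSpace ℝ (Fin N), P (P z) = P z := by
    intro z
    have h1 : Tendsto (fun n => Q (φ n) z) atTop (𝓝 (P z)) := tendsto_apply_clm hPt z
    have h2 : Tendsto (fun n => Q (φ n) z) atTop (𝓝 (P (P z))) := by
      rw [tendsto_iff_norm_sub_tendsto_zero]
      have hb : Tendsto (fun n => ‖Q (φ n) z - P z‖ + ‖Q (φ n) (P z) - P (P z)‖)
          atTop (𝓝 0) := by
        have hb1 := tendsto_iff_norm_sub_tendsto_zero.mp h1
        have hb2 := tendsto_iff_norm_sub_tendsto_zero.mp (tendsto_apply_clm hPt (P z))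
        simpa using hb1.add hb2
      apply squeeze_zero (fun n => norm_nonneg _) _ hb
      intro n
      have hfix : Q (φ n) (Q (φ n) z) = Q (φ n) z := hQfix _ _ (hQmem _ _)
      calc ‖Q (φ n) z - P (P z)‖ = ‖Q (φ n) (Q (φ n) z) - P (P z)‖ := by rw [hfix]
        _ ≤ ‖Q (φ n) (Q (φ n) z) - Q (φ n) (P z)‖ + ‖Q (φ n) (P z) - P (P z)‖ :=
            norm_sub_le_norm_sub_add_norm_sub _ _ _
        _ ≤ ‖Q (φ n) z - P z‖ + ‖Q (φ n) (P z) - P (P z)‖ := by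
            refine add_le_add_left ?_ _
            calc ‖Q (φ n) (Q (φ n) z) - Q (φ n) (P z)‖
                = ‖Q (φ n) (Q (φ n) z - P z)‖ := by rw [map_sub]
              _ ≤ ‖Q (φ n) z - P z‖ := hQnorm _ _
    exact tendsto_nhds_unique h2 h1
  refine ⟨φ, hφ, LinearMap.range (P : E →ₗ[ℝ] E), ?_⟩
  have hmemτ : ∀ z : EuclideanSpace ℝ (Fin N), z ∈ LinearMap.range (P : E →ₗ[ℝ] E) ↔ P z = z := by
    intro z
    constructor
    · rintro ⟨y, rfl⟩; exact hPidem y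
    · intro h; exact ⟨z, h⟩
  apply subconv_of_le (b := fun n => ‖Q (φ n) - P‖)
  · exact tendsto_iff_norm_sub_tendsto_zero.mp hPt
  · intro n
    apply EMetric.hausdorffEdist_le_of_infEdist
    · rintro x ⟨hx1, hx2⟩
      have hx2' : ‖x‖ ≤ 1 := mem_closedBall_zero_iff.mp hx2
      have hy1 : P x ∈ LinearMap.range (P : E →ₗ[ℝ] E) := ⟨x, rfl⟩
      have hy2 : P x ∈ Metric.closedBall (0 : EuclideanSpace ℝ (Fin N)) 1 :=
        mem_closedBall_zero_iff.mpr ((hPnorm x).trans hx2')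
      have hmem : P x ∈ ((LinearMap.range (P : E →ₗ[ℝ] E) : Submodule ℝ (EuclideanSpace ℝ (Fin N))) :
          Set (EuclideanSpace ℝ (Fin N))) ∩ Metric.closedBall 0 1 := ⟨hy1, hy2⟩
      calc EMetric.infEdist x _ ≤ edist x (P x) := EMetric.infEdist_le_edist_of_mem hmem
        _ = ENNReal.ofReal (dist x (P x)) := by rw [edist_dist]
        _ ≤ ENNReal.ofReal ‖Q (φ n) - P‖ := by
            apply ENNReal.ofReal_le_ofReal
            rw [dist_eq_norm]
            calc ‖x - P x‖ = ‖Q (φ n) x - P x‖ := by rw [hQfix _ _ hx1]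
              _ = ‖(Q (φ n) - P) x‖ := by simp
              _ ≤ ‖Q (φ n) - P‖ * ‖x‖ := (Q (φ n) - P).le_opNorm x
              _ ≤ ‖Q (φ n) - P‖ * 1 := by
                  exact mul_le_mul_of_nonneg_left hx2' (norm_nonneg _)
              _ = ‖Q (φ n) - P‖ := mul_one _
    · rintro x ⟨hx1, hx2⟩
      have hx2' : ‖x‖ ≤ 1 := mem_closedBall_zero_iff.mp hx2
      have hfix : P x = x := (hmemτ x).mp hx1
      have hmem : Q (φ n) x ∈ ((V (φ n) : Set (EuclideanSpace ℝ (Fin N))) ∩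
          Metric.closedBall 0 1) :=
        ⟨hQmem _ _, mem_closedBall_zero_iff.mpr ((hQnorm _ _).trans hx2')⟩
      calc EMetric.infEdist x _ ≤ edist x (Q (φ n) x) :=
            EMetric.infEdist_le_edist_of_mem hmem
        _ = ENNReal.ofReal (dist x (Q (φ n) x)) := by rw [edist_dist]
        _ ≤ ENNReal.ofReal ‖Q (φ n) - P‖ := by
            apply ENNReal.ofReal_le_ofReal
            rw [dist_eq_norm]
            calc ‖x - Q (φ n) x‖ = ‖P x - Q (φ n) x‖ := by rw [hfix]
              _ = ‖(Q (φ n) - P) x‖ := by rw [← norm_neg]; simp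
              _ ≤ ‖Q (φ n) - P‖ * ‖x‖ := (Q (φ n) - P).le_opNorm x
              _ ≤ ‖Q (φ n) - P‖ * 1 := by
                  exact mul_le_mul_of_nonneg_left hx2' (norm_nonneg _)
              _ = ‖Q (φ n) - P‖ := mul_one _

/-- Key estimate: if `V n → τ`, `vs n → v` with `‖v‖ ≤ 1`, and `dist v τ < c`,
then eventually `dist (vs n) (V n) < c`. -/
lemma subconv_key {V : ℕ → Submodule ℝ (EuclideanSpace ℝ (Fin N))}
    {τ : Submodule ℝ (EuclideanSpace ℝ (Fin N))} (h : SubConv V τ)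
    {v : EuclideanSpace ℝ (Fin N)} (hv : ‖v‖ ≤ 1)
    {vs : ℕ → EuclideanSpace ℝ (Fin N)} (hvs : Tendsto vs atTop (𝓝 v))
    {c : ℝ} (hc : Metric.infDist v (τ : Set (EuclideanSpace ℝ (Fin N))) < c) :
    ∀ᶠ n in atTop, Metric.infDist (vs n) ((V n : Set (EuclideanSpace ℝ (Fin N)))) < c := by
  set w : EuclideanSpace ℝ (Fin N) := (Submodule.orthogonalProjection τ v : EuclideanSpace ℝ (Fin N))
    with hwdef
  have hwτ : w ∈ τ := SetLike.coe_mem _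
  have hwnorm : ‖w‖ ≤ 1 := by
    calc ‖w‖ ≤ ‖Submodule.orthogonalProjection τ‖ * ‖v‖ := (Submodule.orthogonalProjection τ).le_opNorm v
      _ ≤ 1 * 1 := mul_le_mul (Submodule.orthogonalProjection_norm_le _) hv (norm_nonneg _) zero_le_one
      _ = 1 := mul_one _
  have hwdist : dist v w < c := by
    obtain ⟨w₁, hw₁τ, hw₁⟩ := (Metric.infDist_lt_iff ⟨0, Submodule.zero_mem τ⟩).mp hc
    have hmin : ‖v - w‖ ≤ ‖v - w₁‖ := by
      rw [hwdef, ← Submodule.starProjection_apply, Submodule.starProjection_minimal]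
      exact ciInf_le ⟨0, fun x ⟨y, hy⟩ => hy ▸ norm_nonneg _⟩ (⟨w₁, hw₁τ⟩ : τ)
    rw [dist_eq_norm]
    exact lt_of_le_of_lt hmin (by rwa [dist_eq_norm] at hw₁)
  set δ : ℝ := c - dist v w with hδdef
  have hδpos : 0 < δ := sub_pos.mpr hwdist
  have h1 : ∀ᶠ n in atTop, dist (vs n) v < δ / 3 := by
    have := Metric.tendsto_nhds.mp hvs (δ / 3) (by positivity)
    exact this
  have h2 : ∀ᶠ n in atTop, EMetric.hausdorffEdist
      ((V n : Set (EuclideanSpace ℝ (Fin N))) ∩ Metric.closedBall 0 1)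
      ((τ : Set (EuclideanSpace ℝ (Fin N))) ∩ Metric.closedBall 0 1)
      < ENNReal.ofReal (δ / 3) :=
    h.eventually_lt_const (by simp; positivity)
  filter_upwards [h1, h2] with n hn1 hn2
  have hwmem : w ∈ (τ : Set (EuclideanSpace ℝ (Fin N))) ∩ Metric.closedBall 0 1 :=
    ⟨hwτ, mem_closedBall_zero_iff.mpr hwnorm⟩
  have hinf : EMetric.infEdist w
      ((V n : Set (EuclideanSpace ℝ (Fin N))) ∩ Metric.closedBall 0 1)
      < ENNReal.ofReal (δ / 3) := by
    calc EMetric.infEdist w _ ≤ EMetric.hausdorffEdist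
          ((τ : Set (EuclideanSpace ℝ (Fin N))) ∩ Metric.closedBall 0 1)
          ((V n : Set (EuclideanSpace ℝ (Fin N))) ∩ Metric.closedBall 0 1) :=
        EMetric.infEdist_le_hausdorffEdist_of_mem hwmem
      _ = EMetric.hausdorffEdist
          ((V n : Set (EuclideanSpace ℝ (Fin N))) ∩ Metric.closedBall 0 1)
          ((τ : Set (EuclideanSpace ℝ (Fin N))) ∩ Metric.closedBall 0 1) :=
        EMetric.hausdorffEdist_comm
      _ < ENNReal.ofReal (δ / 3) := hn2
  obtain ⟨wn, ⟨hwn1, _⟩, hwn⟩ := EMetric.infEdist_lt_iff.mp hinf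
  have hwn' : dist w wn < δ / 3 := edist_lt_ofReal.mp hwn
  calc Metric.infDist (vs n) (V n : Set (EuclideanSpace ℝ (Fin N)))
      ≤ dist (vs n) wn := Metric.infDist_le_dist_of_mem hwn1
    _ ≤ dist (vs n) v + dist v w + dist w wn := dist_triangle4 _ _ _ _
    _ < δ / 3 + dist v w + δ / 3 := by
        have := hn1; have := hwn'; linarith
    _ ≤ c := by rw [hδdef] at *; linarith

/-- Whitney's condition (b) implies upper semicontinuity of `β` on `X × X_p`. -/
theorem beta_upperSemicontinuousOn
    (Xp Xq : Set (EuclideanSpace ℝ (Fin N))) (hdisj : Disjoint Xp Xq)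
    (hclosed : ∀ x ∈ Xp ∪ Xq, x ∈ closure Xp → x ∈ Xp)
    (T : EuclideanSpace ℝ (Fin N) → Submodule ℝ (EuclideanSpace ℝ (Fin N)))
    (hTp : ∀ x ∈ Xp, (T x : Set (EuclideanSpace ℝ (Fin N))) = tangentConeAt ℝ Xp x)
    (hTq : ∀ x ∈ Xq, (T x : Set (EuclideanSpace ℝ (Fin N))) = tangentConeAt ℝ Xq x)
    (hTcontp : ∀ x ∈ Xp, ∀ u : ℕ → EuclideanSpace ℝ (Fin N), (∀ n, u n ∈ Xp) →
      Tendsto u atTop (𝓝 x) → SubConv (fun n => T (u n)) (T x))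
    (hTcontq : ∀ x ∈ Xq, ∀ u : ℕ → EuclideanSpace ℝ (Fin N), (∀ n, u n ∈ Xq) →
      Tendsto u atTop (𝓝 x) → SubConv (fun n => T (u n)) (T x))
    (hWa : ∀ y ∈ Xp, ∀ u : ℕ → EuclideanSpace ℝ (Fin N), (∀ n, u n ∈ Xq) →
      Tendsto u atTop (𝓝 y) → ∀ τ : Submodule ℝ (EuclideanSpace ℝ (Fin N)),
        SubConv (fun n => T (u n)) τ → T y ≤ τ)
    (hWb : ∀ y ∈ Xp, ∀ u : ℕ → EuclideanSpace ℝ (Fin N),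
      ((∀ n, u n ∈ Xq) ∨ (∀ n, u n ∈ Xp)) → Tendsto u atTop (𝓝 y) →
      ∀ w : ℕ → EuclideanSpace ℝ (Fin N), (∀ n, w n ∈ Xp) → Tendsto w atTop (𝓝 y) →
      (∀ n, u n ≠ w n) →
      ∀ l τ : Submodule ℝ (EuclideanSpace ℝ (Fin N)),
        SubConv (fun n => Submodule.span ℝ {u n - w n}) l →
        SubConv (fun n => T (u n)) τ → l ≤ τ) :
    UpperSemicontinuousOn
      (fun p : EuclideanSpace ℝ (Fin N) × EuclideanSpace ℝ (Fin N) => beta T p.1 p.2)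
      ((Xp ∪ Xq) ×ˢ Xp) := by
  intro p hp c hc
  by_contra hcon
  rw [Filter.not_eventually] at hcon
  have hfreq : ∃ᶠ z in 𝓝[(Xp ∪ Xq) ×ˢ Xp] p,
      z ∈ (Xp ∪ Xq) ×ˢ Xp ∧ c ≤ beta T z.1 z.2 := by
    apply (hcon.and_eventually self_mem_nhdsWithin).mono
    rintro z ⟨hz1, hz2⟩
    exact ⟨hz2, not_lt.mp hz1⟩
  obtain ⟨q, hqt, hq⟩ := exists_seq_forall_of_frequently hfreq
  have hqt' : Tendsto q atTop (𝓝 p) := hqt.mono_right nhdsWithin_le_nhds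
  set u : ℕ → EuclideanSpace ℝ (Fin N) := fun n => (q n).1 with hudef
  set w : ℕ → EuclideanSpace ℝ (Fin N) := fun n => (q n).2 with hwdef
  have hu_t : Tendsto u atTop (𝓝 p.1) := (continuous_fst.tendsto p).comp hqt'
  have hw_t : Tendsto w atTop (𝓝 p.2) := (continuous_snd.tendsto p).comp hqt'
  have huX : ∀ n, u n ∈ Xp ∪ Xq := fun n => (Set.mem_prod.mp (hq n).1).1
  have hwXp : ∀ n, w n ∈ Xp := fun n => (Set.mem_prod.mp (hq n).1).2
  have hge : ∀ n, c ≤ beta T (u n) (w n) := fun n => (hq n).2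
  have hy0 : p.2 ∈ Xp := (Set.mem_prod.mp hp).2
  have hx0 : p.1 ∈ Xp ∪ Xq := (Set.mem_prod.mp hp).1
  have hb0 : 0 ≤ beta T p.1 p.2 := by
    rw [beta]; split
    · exact le_rfl
    · exact Metric.infDist_nonneg
  have hcpos : 0 < c := lt_of_le_of_lt hb0 hc
  have hne : ∀ n, u n ≠ w n := by
    intro n h
    have : beta T (u n) (w n) = 0 := if_pos h
    have := hge n
    rw [‹beta T (u n) (w n) = 0›] at this
    exact absurd this (not_le.mpr hcpos)
  set v : ℕ → EuclideanSpace ℝ (Fin N) :=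
    fun n => ‖u n - w n‖⁻¹ • (u n - w n) with hvdef
  have hvnorm : ∀ n, ‖v n‖ = 1 := fun n =>
    norm_smul_inv_norm (sub_ne_zero.mpr (hne n))
  have hbeta : ∀ n, c ≤ Metric.infDist (v n)
      ((T (u n) : Set (EuclideanSpace ℝ (Fin N)))) := by
    intro n
    have := hge n
    rwa [beta, if_neg (hne n)] at this
  have hfinish : ∀ (φ : ℕ → ℕ) (τ : Submodule ℝ (EuclideanSpace ℝ (Fin N)))
      (v0 : EuclideanSpace ℝ (Fin N)),
      SubConv (fun n => T (u (φ n))) τ → ‖v0‖ ≤ 1 →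
      Tendsto (fun n => v (φ n)) atTop (𝓝 v0) →
      Metric.infDist v0 (τ : Set (EuclideanSpace ℝ (Fin N))) < c → False := by
    intro φ τ v0 hsc hn1 hvt hlt
    obtain ⟨n, hn'⟩ := (subconv_key hsc hn1 hvt hlt).exists
    exact absurd hn' (not_lt.mpr (hbeta (φ n)))
  rcases hx0 with hx0p | hx0q
  · -- p.1 ∈ Xp
    by_cases hxy : p.1 = p.2
    · -- diagonal case
      have hfq : (∃ᶠ n in atTop, u n ∈ Xq) ∨ (∃ᶠ n in atTop, u n ∈ Xp) := by
        rw [← Filter.frequently_or_distrib]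
        exact Filter.Frequently.of_forall (fun n => (huX n).elim Or.inr Or.inl)
      obtain ⟨φ₁, hφ₁, hstrat⟩ : ∃ φ₁ : ℕ → ℕ, StrictMono φ₁ ∧
          ((∀ n, u (φ₁ n) ∈ Xq) ∨ (∀ n, u (φ₁ n) ∈ Xp)) := by
        rcases hfq with h | h
        · obtain ⟨φ₁, h1, h2⟩ := extraction_of_frequently_atTop h
          exact ⟨φ₁, h1, Or.inl h2⟩
        · obtain ⟨φ₁, h1, h2⟩ := extraction_of_frequently_atTop h
          exact ⟨φ₁, h1, Or.inr h2⟩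
      obtain ⟨v0, hv0mem, φ₂, hφ₂, hv0t⟩ :=
        (isCompact_closedBall (0 : EuclideanSpace ℝ (Fin N)) 1).tendsto_subseq
          (x := fun n => v (φ₁ n))
          (fun n => mem_closedBall_zero_iff.mpr (le_of_eq (hvnorm (φ₁ n))))
      have hv0norm : ‖v0‖ = 1 := by
        have h1 : Tendsto (fun n => ‖v (φ₁ (φ₂ n))‖) atTop (𝓝 ‖v0‖) := hv0t.norm
        have h2 : Tendsto (fun n => ‖v (φ₁ (φ₂ n))‖) atTop (𝓝 1) := by
          have : (fun n => ‖v (φ₁ (φ₂ n))‖) = fun _ => (1 : ℝ) := by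
            funext n; exact hvnorm _
          rw [this]; exact tendsto_const_nhds
        exact tendsto_nhds_unique h1 h2
      obtain ⟨φ₃, hφ₃, τ, hτ⟩ := exists_subconv (fun n => T (u (φ₁ (φ₂ n))))
      set φ : ℕ → ℕ := fun n => φ₁ (φ₂ (φ₃ n)) with hφdef
      have hφmono : StrictMono φ := hφ₁.comp (hφ₂.comp hφ₃)
      have hτ' : SubConv (fun n => T (u (φ n))) τ := hτ
      have hvφt : Tendsto (fun n => v (φ n)) atTop (𝓝 v0) :=
        hv0t.comp hφ₃.tendsto_atTop
      have hspan : SubConv (fun n => Submodule.span ℝ {u (φ n) - w (φ n)})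
          (Submodule.span ℝ {v0}) := by
        have heq : ∀ n, Submodule.span ℝ ({u (φ n) - w (φ n)} :
            Set (EuclideanSpace ℝ (Fin N))) = Submodule.span ℝ {v (φ n)} := by
          intro n
          have hnz : ‖u (φ n) - w (φ n)‖⁻¹ ≠ 0 :=
            inv_ne_zero (norm_ne_zero_iff.mpr (sub_ne_zero.mpr (hne (φ n))))
          exact (Submodule.span_singleton_smul_eq
            (isUnit_iff_ne_zero.mpr hnz) (u (φ n) - w (φ n))).symm
        have := subconv_span (vs := fun n => v (φ n)) (fun n => hvnorm (φ n)) hv0norm hvφt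
        rw [SubConv] at this ⊢
        convert this using 2 with n
        rw [heq n]
      have hut : Tendsto (fun n => u (φ n)) atTop (𝓝 p.2) := by
        rw [← hxy]
        exact hu_t.comp hφmono.tendsto_atTop
      have hwt : Tendsto (fun n => w (φ n)) atTop (𝓝 p.2) :=
        hw_t.comp hφmono.tendsto_atTop
      have hstrat' : (∀ n, u (φ n) ∈ Xq) ∨ (∀ n, u (φ n) ∈ Xp) :=
        hstrat.imp (fun h n => h _) (fun h n => h _)
      have hle : Submodule.span ℝ {v0} ≤ τ :=
        hWb p.2 hy0 (fun n => u (φ n)) hstrat' hut (fun n => w (φ n))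
          (fun n => hwXp _) hwt (fun n => hne (φ n)) _ τ hspan hτ'
      have hv0τ : v0 ∈ τ := hle (Submodule.mem_span_singleton_self v0)
      exact hfinish φ τ v0 hτ' (le_of_eq hv0norm) hvφt
        (by rw [Metric.infDist_zero_of_mem hv0τ]; exact hcpos)
    · -- off-diagonal, p.1 ∈ Xp
      have hne0 : p.1 - p.2 ≠ 0 := sub_ne_zero.mpr hxy
      have hsub : Tendsto (fun n => u n - w n) atTop (𝓝 (p.1 - p.2)) := hu_t.sub hw_t
      have hv_t : Tendsto v atTop (𝓝 (‖p.1 - p.2‖⁻¹ • (p.1 - p.2))) :=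
        ((hsub.norm).inv₀ (norm_ne_zero_iff.mpr hne0)).smul hsub
      have hclt : Metric.infDist (‖p.1 - p.2‖⁻¹ • (p.1 - p.2))
          ((T p.1 : Set (EuclideanSpace ℝ (Fin N)))) < c := by
        simpa only [beta, if_neg hxy] using hc
      have hv0norm : ‖‖p.1 - p.2‖⁻¹ • (p.1 - p.2)‖ = 1 := norm_smul_inv_norm hne0
      have hfq : (∃ᶠ n in atTop, u n ∈ Xq) ∨ (∃ᶠ n in atTop, u n ∈ Xp) := by
        rw [← Filter.frequently_or_distrib]
        exact Filter.Frequently.of_forall (fun n => (huX n).elim Or.inr Or.inl)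
      rcases hfq with h | h
      · -- frequently in Xq : use compactness and Whitney (a)
        obtain ⟨φ₁, hφ₁, hφ₁q⟩ := extraction_of_frequently_atTop h
        obtain ⟨φ₂, hφ₂, τ, hτ⟩ := exists_subconv (fun n => T (u (φ₁ n)))
        set φ : ℕ → ℕ := fun n => φ₁ (φ₂ n) with hφdef
        have hφmono : StrictMono φ := hφ₁.comp hφ₂
        have hτ' : SubConv (fun n => T (u (φ n))) τ := hτ
        have hTle : T p.1 ≤ τ :=
          hWa p.1 hx0p (fun n => u (φ n)) (fun n => hφ₁q (φ₂ n))
            (hu_t.comp hφmono.tendsto_atTop) τ hτ'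
        have hsubs : (T p.1 : Set (EuclideanSpace ℝ (Fin N))) ⊆
            (τ : Set (EuclideanSpace ℝ (Fin N))) := fun x hx => hTle hx
        have hclt' : Metric.infDist (‖p.1 - p.2‖⁻¹ • (p.1 - p.2))
            ((τ : Set (EuclideanSpace ℝ (Fin N)))) < c :=
          lt_of_le_of_lt (Metric.infDist_le_infDist_of_subset hsubs
            ⟨0, Submodule.zero_mem _⟩) hclt
        exact hfinish φ τ _ hτ' (le_of_eq hv0norm)
          (hv_t.comp hφmono.tendsto_atTop) hclt'
      · -- frequently in Xp : use continuity of T on Xp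
        obtain ⟨φ, hφ, hφp⟩ := extraction_of_frequently_atTop h
        exact hfinish φ (T p.1) _
          (hTcontp p.1 hx0p (fun n => u (φ n)) hφp (hu_t.comp hφ.tendsto_atTop))
          (le_of_eq hv0norm) (hv_t.comp hφ.tendsto_atTop) hclt
  · -- p.1 ∈ Xq
    have hx0nc : p.1 ∉ closure Xp := by
      intro h
      exact Set.disjoint_left.mp hdisj (hclosed p.1 (Set.mem_union_right _ hx0q) h) hx0q
    have hxy : p.1 ≠ p.2 := fun h => hx0nc (h ▸ subset_closure hy0)
    have hUq : ∀ᶠ n in atTop, u n ∈ Xq := by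
      have hopen : IsOpen (closure Xp)ᶜ := isClosed_closure.isOpen_compl
      have hev := hu_t (hopen.mem_nhds hx0nc)
      filter_upwards [hev] with n hn
      rcases huX n with h | h
      · exact absurd (subset_closure h) hn
      · exact h
    obtain ⟨φ, hφ, hφq⟩ := extraction_of_frequently_atTop hUq.frequently
    have hne0 : p.1 - p.2 ≠ 0 := sub_ne_zero.mpr hxy
    have hsub : Tendsto (fun n => u n - w n) atTop (𝓝 (p.1 - p.2)) := hu_t.sub hw_t
    have hv_t : Tendsto v atTop (𝓝 (‖p.1 - p.2‖⁻¹ • (p.1 - p.2))) :=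
      ((hsub.norm).inv₀ (norm_ne_zero_iff.mpr hne0)).smul hsub
    have hclt : Metric.infDist (‖p.1 - p.2‖⁻¹ • (p.1 - p.2))
        ((T p.1 : Set (EuclideanSpace ℝ (Fin N)))) < c := by
      simpa only [beta, if_neg hxy] using hc
    exact hfinish φ (T p.1) _
      (hTcontq p.1 hx0q (fun n => u (φ n)) hφq (hu_t.comp hφ.tendsto_atTop))
      (le_of_eq (norm_smul_inv_norm hne0)) (hv_t.comp hφ.tendsto_atTop) hclt


end Stmt16
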